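/- For odd n = 2k+1 with n ≥ 5, the schedule generated by the circle design (with a dummy team giving byes) has guaranteed rest time exactly k-2. -/

import Mathlib

/-- `f` lists the games of a single round-robin tournament on `n` teams:
positions `0, ..., N-1` are in bijection with the unordered pairs of distinct teams. -/
def isSchedule (n N : ℕ) (f : ℕ → Sym2 (Fin n)) : Prop :=
  (∀ i, i < N → ¬ (f i).IsDiag) ∧
  ∀ p : Sym2 (Fin n), ¬ p.IsDiag → ∃! i, i < N ∧ f i = p

/-- The schedule has guaranteed rest time at least `b`: any two games involving a
common team `t` are separated by at least `b` games not involving `t`. -/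
def hasRest (n N : ℕ) (f : ℕ → Sym2 (Fin n)) (b : ℕ) : Prop :=
  ∀ t : Fin n, ∀ i j, i < j → j < N → t ∈ f i → t ∈ f j →
    b ≤ ((Finset.Ioo i j).filter (fun l => t ∉ f l)).card

/-- Number of games played by team `t` in the first `m` games. -/
def played (n : ℕ) (f : ℕ → Sym2 (Fin n)) (t : Fin n) (m : ℕ) : ℕ :=
  ((Finset.range m).filter (fun i => t ∈ f i)).card

/-- The games-played difference index is at most `p`. -/
def gpLe (n N : ℕ) (f : ℕ → Sym2 (Fin n)) (p : ℕ) : Prop :=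
  ∀ m, m ≤ N → ∀ t1 t2 : Fin n, played n f t1 m ≤ played n f t2 m + p

/-- The rest of team `t` going into the game at position `i`: the number of games since
`t`'s previous game, where all teams play an imaginary game one slot before game `0`. -/
def rest (n : ℕ) (f : ℕ → Sym2 (Fin n)) (t : Fin n) (i : ℕ) : ℕ :=
  ((Finset.range i).filter (fun j => ∀ l, j ≤ l → l < i → t ∉ f l)).card

/-- The rest difference index is at most `d`. -/
def rdLe (n N : ℕ) (f : ℕ → Sym2 (Fin n)) (d : ℕ) : Prop :=
  ∀ i, i < N → ∀ t1 t2 : Fin n, t1 ∈ f i → t2 ∈ f i →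
    rest n f t1 i ≤ rest n f t2 i + d

/-- Circle design for odd `n = 2k+1` teams `0, ..., 2k` (team `t` is team `t+1` of the
paper): a dummy team is fixed at the top-left; the `2k+1` real teams occupy cyclic
positions `0, ..., 2k` (top-row columns `1..k` left to right, then bottom-row columns
`k` down to `0`), each rotating one step per round; the team at cyclic position `2k`
(below the dummy) sits out the round. -/
def circleTeamO (k : ℕ) (r c : ℕ) : Fin (2*k+1) :=
  ⟨(c + (2*k+1) - r % (2*k+1)) % (2*k+1), Nat.mod_lt _ (by omega)⟩

/-- The `i`-th game (0-indexed) of the asynchronous circle-design schedule for `2k+1`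
teams: round `i / k`, column `i % k + 1`, columns read left to right. -/
def circleGameO (k : ℕ) (i : ℕ) : Sym2 (Fin (2*k+1)) :=
  s(circleTeamO k (i / k) (i % k), circleTeamO k (i / k) (2*k - 1 - i % k))

/-- For odd `n = 2k+1 ≥ 5`, the circle-design schedule (with a dummy team giving byes)
has guaranteed rest time exactly `k-2`. -/

lemma eqA (m t c r : ℕ) (hm : 0 < m) (ht : t < m) (hc : c < m) :
    t = (c + m - r % m) % m ↔ (t + r) % m = c := by
  have hs : r % m < m := Nat.mod_lt _ hm
  constructor
  · rintro rfl
    have h1 : c + m - r % m + r = c + m * (r / m + 1) := by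
      have h0 : m * (r / m + 1) = m * (r / m) + m := by ring
      have := Nat.div_add_mod r m
      omega
    rw [Nat.mod_add_mod, h1, Nat.add_mul_mod_self_left, Nat.mod_eq_of_lt hc]
  · intro h
    have h2 : (t + r % m) % m = c := by rw [Nat.add_mod_mod, h]
    rcases Nat.lt_or_ge (t + r % m) m with hlt | hge
    · rw [Nat.mod_eq_of_lt hlt] at h2
      rw [show c + m - r % m = t + m by omega, Nat.add_mod_right, Nat.mod_eq_of_lt ht]
    · have h3 : (t + r % m) % m = t + r % m - m := by
        rw [Nat.mod_eq_sub_mod hge, Nat.mod_eq_of_lt (by omega)]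
      rw [h3] at h2
      rw [show c + m - r % m = t by omega, Nat.mod_eq_of_lt ht]

lemma memO (k : ℕ) (hk : 2 ≤ k) (t : Fin (2*k+1)) (i : ℕ) :
    t ∈ circleGameO k i ↔
      ((t.val + i / k) % (2*k+1) = i % k ∨ (t.val + i / k) % (2*k+1) = 2*k - 1 - i % k) := by
  have hm : 0 < 2*k+1 := by omega
  have hp : i % k < k := Nat.mod_lt _ (by omega)
  rw [circleGameO, Sym2.mem_iff, Fin.ext_iff, Fin.ext_iff]
  exact or_congr
    (eqA (2*k+1) t.val (i % k) (i / k) hm t.isLt (by omega))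
    (eqA (2*k+1) t.val (2*k - 1 - i % k) (i / k) hm t.isLt (by omega))
lemma gapO (k : ℕ) (hk : 2 ≤ k) (t : Fin (2*k+1)) (i j : ℕ) (hij : i < j)
    (hi : t ∈ circleGameO k i) (hj : t ∈ circleGameO k j) : k - 1 ≤ j - i := by
  have hk0 : 0 < k := by omega
  have hm : 0 < 2*k+1 := by omega
  rw [memO k hk] at hi hj
  have hpk : i % k < k := Nat.mod_lt _ hk0
  have hpk' : j % k < k := Nat.mod_lt _ hk0
  have hieq : k * (i / k) + i % k = i := Nat.div_add_mod i k
  have hjeq : k * (j / k) + j % k = j := Nat.div_add_mod j k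
  have hrr' : i / k ≤ j / k := Nat.div_le_div_right hij.le
  have hc : (t.val + i / k) % (2*k+1) < 2*k+1 := Nat.mod_lt _ hm
  have hc' : (t.val + j / k) % (2*k+1) < 2*k+1 := Nat.mod_lt _ hm
  rcases Nat.lt_or_ge (j / k) (i / k + 2) with h2 | h2
  · have hcase : j / k = i / k ∨ j / k = i / k + 1 := by omega
    rcases hcase with hcase | hcase
    · exfalso
      rw [hcase] at hjeq hj
      have : i % k = j % k := by omega
      omega
    · rw [hcase] at hjeq hj
      have hmul : k * (i / k + 1) = k * (i / k) + k := by ring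
      rw [hmul] at hjeq
      have hstep : (t.val + (i / k + 1)) % (2*k+1)
          = ((t.val + i / k) % (2*k+1) + 1) % (2*k+1) := by
        rw [show t.val + (i / k + 1) = t.val + i / k + 1 by omega,
          Nat.add_mod (t.val + i / k) 1, Nat.mod_eq_of_lt (show 1 < 2*k+1 by omega)]
      rw [hstep] at hj
      have hsucc : ((t.val + i / k) % (2*k+1) + 1) % (2*k+1)
            = (t.val + i / k) % (2*k+1) + 1
          ∨ ((t.val + i / k) % (2*k+1) = 2*k
            ∧ ((t.val + i / k) % (2*k+1) + 1) % (2*k+1) = 0) := by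
        rcases Nat.lt_or_ge ((t.val + i / k) % (2*k+1) + 1) (2*k+1) with h | h
        · exact Or.inl (Nat.mod_eq_of_lt h)
        · right
          have he : (t.val + i / k) % (2*k+1) = 2*k := by omega
          rw [he]
          exact ⟨rfl, by simp⟩
      omega
  · have hmul2 : k * (i / k) + k * 2 ≤ k * (j / k) := by
      have := Nat.mul_le_mul_left k h2
      rw [Nat.mul_add] at this
      omega
    omega
theorem stmt12 (k : ℕ) (hk : 2 ≤ k) :
    hasRest (2*k+1) ((2*k+1)*(2*k)/2) (circleGameO k) (k-2) ∧
    ¬ hasRest (2*k+1) ((2*k+1)*(2*k)/2) (circleGameO k) (k-1) := by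
  classical
  have hk0 : 0 < k := by omega
  have hkk : k ≤ k * k := Nat.le_mul_of_pos_left k hk0
  have hN : (2*k+1)*(2*k)/2 = 2*(k*k) + k := by
    rw [show (2*k+1)*(2*k) = 2*(2*(k*k)+k) by ring, Nat.mul_div_cancel_left _ (by norm_num)]
  constructor
  · intro t i j hij hjN hti htj
    have hex : ∃ l, i < l ∧ t ∈ circleGameO k l := ⟨j, hij, htj⟩
    obtain ⟨hij', htj'⟩ := Nat.find_spec hex
    have hj'j : Nat.find hex ≤ j := Nat.find_min' hex ⟨hij, htj⟩
    have hgap : k - 1 ≤ Nat.find hex - i := gapO k hk t i (Nat.find hex) hij' hti htj'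
    have hsub : Finset.Ioo i (Nat.find hex)
        ⊆ (Finset.Ioo i j).filter (fun l => t ∉ circleGameO k l) := by
      intro l hl
      rw [Finset.mem_Ioo] at hl
      rw [Finset.mem_filter, Finset.mem_Ioo]
      exact ⟨⟨hl.1, lt_of_lt_of_le hl.2 hj'j⟩,
        fun hmem => Nat.find_min hex hl.2 ⟨hl.1, hmem⟩⟩
    have hcard := Finset.card_le_card hsub
    rw [Nat.card_Ioo] at hcard
    omega
  · intro h
    set t : Fin (2*k+1) := ⟨0, by omega⟩ with ht
    have hidiv : (k * k + (k-1)) / k = k := by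
      rw [Nat.mul_add_div hk0, Nat.div_eq_of_lt (by omega)]
      omega
    have himod : (k * k + (k-1)) % k = k - 1 := by
      rw [Nat.mul_add_mod, Nat.mod_eq_of_lt (by omega)]
    have hjdiv : (k * (k+1) + (k-2)) / k = k + 1 := by
      rw [Nat.mul_add_div hk0, Nat.div_eq_of_lt (by omega)]
    have hjmod : (k * (k+1) + (k-2)) % k = k - 2 := by
      rw [Nat.mul_add_mod, Nat.mod_eq_of_lt (by omega)]
    have hti : t ∈ circleGameO k (k * k + (k-1)) := by
      rw [memO k hk, hidiv, himod]
      right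
      simp only [ht]
      rw [Nat.zero_add, Nat.mod_eq_of_lt (by omega)]
      omega
    have htj : t ∈ circleGameO k (k * (k+1) + (k-2)) := by
      rw [memO k hk, hjdiv, hjmod]
      right
      simp only [ht]
      rw [Nat.zero_add, Nat.mod_eq_of_lt (by omega)]
      omega
    have hlt : k * k + (k-1) < k * (k+1) + (k-2) := by
      have : k * (k+1) = k * k + k := by ring
      omega
    have hltN : k * (k+1) + (k-2) < (2*k+1)*(2*k)/2 := by
      rw [hN]
      have : k * (k+1) = k * k + k := by ring
      omega
    have hno : ∀ l ∈ Finset.Ioo (k * k + (k-1)) (k * (k+1) + (k-2)),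
        t ∉ circleGameO k l := by
      intro l hl htl
      rw [Finset.mem_Ioo] at hl
      have hk1 : k * (k+1) = k * k + k := by ring
      have hdl : k * (k+1) ≤ l := by omega
      set d := l - k * (k+1) with hd
      have hld : l = k * (k+1) + d := by omega
      have hdk : d < k - 2 := by omega
      rw [hld, memO k hk, Nat.mul_add_div hk0, Nat.div_eq_of_lt (show d < k by omega),
        Nat.mul_add_mod, Nat.mod_eq_of_lt (show d < k by omega)] at htl
      simp only [ht] at htl
      rw [Nat.zero_add, Nat.add_zero, Nat.mod_eq_of_lt (by omega)] at htl
      omega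
    have := h t _ _ hlt hltN hti htj
    rw [Finset.filter_true_of_mem hno, Nat.card_Ioo] at this
    have hk1 : k * (k+1) = k * k + k := by ring
    omega
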